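/- Let q_s < q_t and let κ₋ = Σ_{w∈W} r^w τ_w with r_s = 1, r_t = −1/q_t, where r^w is the product of r-parameters along a reduced expression for w. Then in L²_q W one has τ_s κ₋ = q_s κ₋ and τ_t κ₋ = −κ₋, and equivalently s·κ₋ = κ₋ and t·κ₋ = −κ₋. -/

import Mathlib

def zmodToInt (n : ZMod 0) : ℤ := n

def dihLen : DihedralGroup 0 → ℕ
  | .r n => 2 * (zmodToInt n).natAbs
  | .sr k => if zmodToInt k ≤ 0 then 2 * (zmodToInt k).natAbs + 1
             else 2 * (zmodToInt k).natAbs - 1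

def dihProd (a b : ℝ) : DihedralGroup 0 → ℝ
  | .r n => (a * b) ^ (zmodToInt n).natAbs
  | .sr k => if zmodToInt k ≤ 0 then a ^ ((zmodToInt k).natAbs + 1) * b ^ (zmodToInt k).natAbs
             else a ^ ((zmodToInt k).natAbs - 1) * b ^ (zmodToInt k).natAbs

lemma zmodToInt_add (a c : ZMod 0) : zmodToInt (a + c) = zmodToInt a + zmodToInt c := rfl
lemma zmodToInt_one : zmodToInt 1 = 1 := rfl

lemma dihProd_one_r (b : ℝ) (n : ZMod 0) :
    dihProd 1 b (.r n) = b ^ (zmodToInt n).natAbs := by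
  simp [dihProd]

lemma dihProd_one_sr (b : ℝ) (k : ZMod 0) :
    dihProd 1 b (.sr k) = b ^ (zmodToInt k).natAbs := by
  rcases le_or_gt (zmodToInt k) 0 with h | h
  · rw [show dihProd 1 b (.sr k) = if zmodToInt k ≤ 0 then (1:ℝ) ^ ((zmodToInt k).natAbs + 1) * b ^ (zmodToInt k).natAbs
             else 1 ^ ((zmodToInt k).natAbs - 1) * b ^ (zmodToInt k).natAbs from rfl, if_pos h, one_pow, one_mul]
  · rw [show dihProd 1 b (.sr k) = if zmodToInt k ≤ 0 then (1:ℝ) ^ ((zmodToInt k).natAbs + 1) * b ^ (zmodToInt k).natAbs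
             else 1 ^ ((zmodToInt k).natAbs - 1) * b ^ (zmodToInt k).natAbs from rfl, if_neg (not_le.mpr h), one_pow, one_mul]

lemma dihLen_r (n : ZMod 0) : dihLen (.r n) = 2 * (zmodToInt n).natAbs := rfl
lemma dihLen_sr (k : ZMod 0) : dihLen (.sr k) =
    (if zmodToInt k ≤ 0 then 2 * (zmodToInt k).natAbs + 1
             else 2 * (zmodToInt k).natAbs - 1) := rfl

lemma halving {H : Type*} [NormedAddCommGroup H] [InnerProductSpace ℝ H] [CompleteSpace H]
    (f : DihedralGroup 0 → H) (hsum : Summable f) (κ : H) (hκ : κ = ∑' w, f w)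
    (L : H →L[ℝ] H) (u : ZMod 0) (c : ℝ)
    (hkey : ∀ w : DihedralGroup 0,
      L (f w) + L (f (.sr u * w)) = c • (f w + f (.sr u * w))) :
    L κ = c • κ := by
  set σ : DihedralGroup 0 ≃ DihedralGroup 0 := Equiv.mulLeft (DihedralGroup.sr u) with hσ
  have hσw : ∀ w, σ w = .sr u * w := fun w => rfl
  have hfσ : Summable (fun w => f (σ w)) := σ.summable_iff.mpr hsum
  have hg : Summable (fun w => L (f w)) := hsum.map L L.continuous
  have hgσ : Summable (fun w => L (f (σ w))) := σ.summable_iff.mpr hg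
  have t1 : L κ = ∑' w, L (f w) := by rw [hκ]; exact L.map_tsum hsum
  have t2 : L κ = ∑' w, L (f (σ w)) := by
    rw [t1]; exact (σ.tsum_eq (fun w => L (f w))).symm
  have tf : κ = ∑' w, f (σ w) := by
    rw [hκ]; exact (σ.tsum_eq f).symm
  have h2 : L κ + L κ = c • κ + c • κ := by
    calc L κ + L κ = ∑' w, (L (f w) + L (f (σ w))) := by
          nth_rewrite 2 [t2]; rw [t1]; exact (hg.tsum_add hgσ).symm
      _ = ∑' w, c • (f w + f (σ w)) := tsum_congr fun w => by rw [hσw]; exact hkey w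
      _ = c • ∑' w, (f w + f (σ w)) := by rw [tsum_const_smul'']
      _ = c • (κ + κ) := by rw [hsum.tsum_add hfσ, ← hκ, ← tf]
      _ = c • κ + c • κ := smul_add _ _ _
  have h2' : (2 : ℝ) • L κ = (2 : ℝ) • (c • κ) := by
    rw [two_smul, two_smul]; exact h2
  exact smul_right_injective H two_ne_zero h2'


theorem kappa_minus_eigen (qs qt : ℝ) (hqs : 0 < qs) (hqt : 0 < qt)
    (hq : qs < qt)
    {H : Type*} [NormedAddCommGroup H] [InnerProductSpace ℝ H] [CompleteSpace H]
    (τ : DihedralGroup 0 → H)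
    (hinner : ∀ w w' : DihedralGroup 0,
      inner (𝕜 := ℝ) (τ w) (τ w') = if w = w' then dihProd qs qt w else 0)
    (Ls Lt : H →L[ℝ] H)
    (hLs : ∀ w : DihedralGroup 0,
      Ls (τ w) = if dihLen (DihedralGroup.sr 0 * w) > dihLen w
        then τ (DihedralGroup.sr 0 * w)
        else (qs - 1) • τ w + qs • τ (DihedralGroup.sr 0 * w))
    (hLt : ∀ w : DihedralGroup 0,
      Lt (τ w) = if dihLen (DihedralGroup.sr 1 * w) > dihLen w
        then τ (DihedralGroup.sr 1 * w)
        else (qt - 1) • τ w + qt • τ (DihedralGroup.sr 1 * w))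
    (κ : H) (hκ : κ = ∑' w, dihProd 1 (-1 / qt) w • τ w)
    (hsum : Summable fun w => dihProd 1 (-1 / qt) w • τ w) :
    Ls κ = qs • κ ∧
    Lt κ = -κ ∧
    ((1 - qs) / (1 + qs)) • κ + (2 / (1 + qs)) • Ls κ = κ ∧
    ((1 - qt) / (1 + qt)) • κ + (2 / (1 + qt)) • Lt κ = -κ := by
  have hqt0 : qt ≠ 0 := ne_of_gt hqt
  set b : ℝ := -1 / qt with hb
  set f : DihedralGroup 0 → H := fun w => dihProd 1 b w • τ w with hf
  clear_value b f
  have main : ∀ (L : H →L[ℝ] H) (u : ZMod 0) (c : ℝ),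
      (∀ w : DihedralGroup 0,
        L (f w) + L (f (.sr u * w)) = c • (f w + f (.sr u * w))) →
      L κ = c • κ := fun L u c hk => halving f hsum κ hκ L u c hk
  -- s-pairs
  have pair_s : ∀ n : ZMod 0,
      Ls (f (.r n)) + Ls (f (.sr n)) = qs • (f (.r n) + f (.sr n)) := by
    intro n
    have hm1 : (DihedralGroup.sr 0 * DihedralGroup.r n : DihedralGroup 0) = .sr n := by
      rw [DihedralGroup.sr_mul_r, zero_add]
    have hm2 : (DihedralGroup.sr 0 * DihedralGroup.sr n : DihedralGroup 0) = .r n := by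
      rw [DihedralGroup.sr_mul_sr, sub_zero]
    simp only [hf]
    rw [map_smul, map_smul, hLs, hLs, hm1, hm2, dihProd_one_r, dihProd_one_sr]
    rcases le_or_gt (zmodToInt n) 0 with hn | hn
    · have c1 : dihLen (DihedralGroup.sr n) > dihLen (DihedralGroup.r n) := by
        rw [dihLen_r, dihLen_sr, if_pos hn]; omega
      rw [if_pos c1, if_neg (by omega)]
      module
    · have c1 : dihLen (DihedralGroup.r n) > dihLen (DihedralGroup.sr n) := by
        rw [dihLen_r, dihLen_sr, if_neg (not_le.mpr hn)]; omega
      rw [if_neg (by omega), if_pos c1]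
      module
  have key_s : ∀ w : DihedralGroup 0,
      Ls (f w) + Ls (f (.sr 0 * w)) = qs • (f w + f (.sr 0 * w)) := by
    intro w
    match w with
    | .r n =>
      have hm1 : (DihedralGroup.sr 0 * DihedralGroup.r n : DihedralGroup 0) = .sr n := by
        rw [DihedralGroup.sr_mul_r, zero_add]
      rw [hm1]; exact pair_s n
    | .sr k =>
      have hm2 : (DihedralGroup.sr 0 * DihedralGroup.sr k : DihedralGroup 0) = .r k := by
        rw [DihedralGroup.sr_mul_sr, sub_zero]
      rw [hm2]
      calc Ls (f (.sr k)) + Ls (f (.r k)) = Ls (f (.r k)) + Ls (f (.sr k)) := add_comm _ _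
        _ = qs • (f (.r k) + f (.sr k)) := pair_s k
        _ = qs • (f (.sr k) + f (.r k)) := by rw [add_comm (f (.r k))]
  -- t-pairs
  have pair_t : ∀ n : ZMod 0,
      Lt (f (.r n)) + Lt (f (.sr (1 + n))) = (-1 : ℝ) • (f (.r n) + f (.sr (1 + n))) := by
    intro n
    have hm1 : (DihedralGroup.sr 1 * DihedralGroup.r n : DihedralGroup 0) = .sr (1 + n) := by
      rw [DihedralGroup.sr_mul_r]
    have hm2 : (DihedralGroup.sr 1 * DihedralGroup.sr (1 + n) : DihedralGroup 0) = .r n := by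
      rw [DihedralGroup.sr_mul_sr, add_sub_cancel_left]
    simp only [hf]
    rw [map_smul, map_smul, hLt, hLt, hm1, hm2, dihProd_one_r, dihProd_one_sr,
      zmodToInt_add, zmodToInt_one]
    rcases le_or_gt 0 (zmodToInt n) with hn | hn
    · have c1 : dihLen (DihedralGroup.sr (1 + n)) > dihLen (DihedralGroup.r n) := by
        rw [dihLen_r, dihLen_sr, zmodToInt_add, zmodToInt_one]
        rw [if_neg (by omega)]; omega
      rw [if_pos c1, if_neg (by omega)]
      have habs : (1 + zmodToInt n).natAbs = (zmodToInt n).natAbs + 1 := by omega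
      rw [habs, pow_succ]
      match_scalars
      · simp only [hb]; field_simp; ring
      · simp only [hb]; field_simp
    · have c1 : dihLen (DihedralGroup.r n) > dihLen (DihedralGroup.sr (1 + n)) := by
        rw [dihLen_r, dihLen_sr, zmodToInt_add, zmodToInt_one]
        rw [if_pos (by omega)]; omega
      rw [if_neg (by omega), if_pos c1]
      have habs : (1 + zmodToInt n).natAbs + 1 = (zmodToInt n).natAbs := by omega
      rw [← habs, pow_succ]
      match_scalars
      · simp only [hb]; field_simp; ring
      · simp only [hb]; field_simp
  have key_t : ∀ w : DihedralGroup 0,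
      Lt (f w) + Lt (f (.sr 1 * w)) = (-1 : ℝ) • (f w + f (.sr 1 * w)) := by
    intro w
    match w with
    | .r n =>
      have hm1 : (DihedralGroup.sr 1 * DihedralGroup.r n : DihedralGroup 0) = .sr (1 + n) := by
        rw [DihedralGroup.sr_mul_r]
      rw [hm1]; exact pair_t n
    | .sr k =>
      have hm2 : (DihedralGroup.sr 1 * DihedralGroup.sr k : DihedralGroup 0) = .r (k - 1) := by
        rw [DihedralGroup.sr_mul_sr]
      have hk : (1 : ZMod 0) + (k - 1) = k := by ring
      have hp := pair_t (k - 1)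
      rw [hk] at hp
      rw [hm2]
      calc Lt (f (.sr k)) + Lt (f (.r (k - 1)))
          = Lt (f (.r (k - 1))) + Lt (f (.sr k)) := add_comm _ _
        _ = (-1 : ℝ) • (f (.r (k - 1)) + f (.sr k)) := hp
        _ = (-1 : ℝ) • (f (.sr k) + f (.r (k - 1))) := by rw [add_comm (f (.r (k - 1)))]
  have h1 : Ls κ = qs • κ := main Ls 0 qs key_s
  have h2' : Lt κ = (-1 : ℝ) • κ := main Lt 1 (-1) key_t
  have h2 : Lt κ = -κ := by rw [h2', neg_one_smul]
  have h1qs : (1 : ℝ) + qs ≠ 0 := by positivity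
  have h1qt : (1 : ℝ) + qt ≠ 0 := by positivity
  refine ⟨h1, h2, ?_, ?_⟩
  · rw [h1]; match_scalars; field_simp; ring
  · rw [h2]; match_scalars; field_simp; ring
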